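/- Let 1 ≤ r ≤ k and C be positive integers and let ε > 0. Then there is a constant c = c(k,C,ε) > 0 such that the following holds. Let H be a weighted k-uniform hypergraph on [N] with Δ_r(H) ≤ C, and let t ∈ (0,1). Then for all p ≤ t and all positive integers ℓ ≤ c·t^{k/r}·N, E[ N^H(B_p)^ℓ ] ≤ max{ μ^ℓ·(1+ε/2)^ℓ , (ε·t^k·N^r/2)^ℓ }, where μ = p^k·e(H). -/

import Mathlib

open Finset Filter MeasureTheory
open scoped Classical

noncomputable section

namespace Paper

/-- `a ≪ b` : `a N / b N → 0`. -/
def smallo (a b : ℕ → ℝ) : Prop :=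
  Filter.Tendsto (fun n => a n / b n) Filter.atTop (nhds 0)

variable {N : ℕ}

/-- `N^H(B)` : sum of weights of edges of the weighted hypergraph `w` contained in `B`. -/
def edgeCount (w : Finset (Fin N) → ℝ) (B : Finset (Fin N)) : ℝ :=
  ∑ e ∈ B.powerset, w e

/-- `e(H)` : total edge weight. -/
def totalWeight (w : Finset (Fin N) → ℝ) : ℝ :=
  ∑ e : Finset (Fin N), w e

/-- `d_H(x)` : weighted degree of a vertex. -/
def vdeg (w : Finset (Fin N) → ℝ) (x : Fin N) : ℝ :=
  ∑ e ∈ Finset.univ.filter (fun e : Finset (Fin N) => x ∈ e), w e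

/-- `d_H(R)` : weighted degree of a set of vertices. -/
def degSet (w : Finset (Fin N) → ℝ) (R : Finset (Fin N)) : ℝ :=
  ∑ e ∈ Finset.univ.filter (fun e : Finset (Fin N) => R ⊆ e), w e

/-- `d̄(H)` : average degree. -/
def avgDeg (w : Finset (Fin N) → ℝ) : ℝ :=
  (∑ x : Fin N, vdeg w x) / N

/-- `σ²(H)` : degree variance. -/
def degVar (w : Finset (Fin N) → ℝ) : ℝ :=
  (∑ x : Fin N, (vdeg w x - avgDeg w) ^ 2) / N

/-- Probability of an event in the binomial model `B_p`. -/
def probBp (N : ℕ) (p : ℝ) (E : Finset (Fin N) → Prop) : ℝ :=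
  ∑ B : Finset (Fin N), if E B then p ^ B.card * (1 - p) ^ (N - B.card) else 0

/-- Expectation in the binomial model `B_p`. -/
def expBp (N : ℕ) (p : ℝ) (f : Finset (Fin N) → ℝ) : ℝ :=
  ∑ B : Finset (Fin N), p ^ B.card * (1 - p) ^ (N - B.card) * f B

/-- Probability of an event in the uniform model `B_m`. -/
def probBm (N m : ℕ) (E : Finset (Fin N) → Prop) : ℝ :=
  ((Finset.univ.filter (fun B : Finset (Fin N) => B.card = m ∧ E B)).card : ℝ) /
    (N.choose m : ℝ)

/-- Expectation in the uniform model `B_m`. -/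
def expBm (N m : ℕ) (f : Finset (Fin N) → ℝ) : ℝ :=
  (∑ B ∈ Finset.univ.filter (fun B : Finset (Fin N) => B.card = m), f B) / (N.choose m : ℝ)

/-- `D^H(B)` in the uniform model: deviation of the edge count from its `B_m`-mean `L^H(m)`. -/
def devBm (w : Finset (Fin N) → ℝ) (m : ℕ) (B : Finset (Fin N)) : ℝ :=
  edgeCount w B - expBm N m (edgeCount w)

/-- Probability of an event under a uniformly random permutation of `[N]`. -/
def probPerm (N : ℕ) (E : Equiv.Perm (Fin N) → Prop) : ℝ :=
  ((Finset.univ.filter E).card : ℝ) / (N.factorial : ℝ)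

/-- `B_i` : the set of the first `i` elements of the permutation `π`
(`π j` is the `(j+1)`-st chosen element). -/
def prefixSet (π : Equiv.Perm (Fin N)) (i : ℕ) : Finset (Fin N) :=
  Finset.univ.filter (fun v => (π.symm v : ℕ) < i)

/-- `A_ℓ(B_i)` where `B = B_{i-1}` and `x = b_i` : the number of pairs `(S, f)` with
`|S| = ℓ`, `x ∈ S`, `f` an edge, `S ⊆ f ∩ B_i`, counted with edge weights. -/
def Aval (w : Finset (Fin N) → ℝ) (ℓ : ℕ) (B : Finset (Fin N)) (x : Fin N) : ℝ :=
  ∑ f : Finset (Fin N),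
    w f * ((f.powerset.filter (fun S => S.card = ℓ ∧ x ∈ S ∧ S ⊆ insert x B)).card : ℝ)

/-- `X_ℓ(B_i)` where `B = B_{i-1}` and `x = b_i` : the centered increment
`A_ℓ(B_i) - E[A_ℓ(B_i) | B_{i-1}]` (the next element is uniform on the complement of `B`). -/
def Xval (w : Finset (Fin N) → ℝ) (ℓ : ℕ) (B : Finset (Fin N)) (x : Fin N) : ℝ :=
  Aval w ℓ B x - (∑ y ∈ Bᶜ, Aval w ℓ B y) / (Bᶜ.card : ℝ)

/-- `Y_ℓ(B_i)` where `B = B_{i-1}` (so `B.card = i - 1`) and `x = b_i`. -/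
def Yval (w : Finset (Fin N) → ℝ) (k ℓ : ℕ) (B : Finset (Fin N)) (x : Fin N) : ℝ :=
  Xval w ℓ B x - ((k - 1).choose (ℓ - 1) : ℝ) *
      ((B.card.descFactorial (ℓ - 1) : ℝ) / ((N - 1).descFactorial (ℓ - 1) : ℝ)) *
    Xval w 1 B x

/-- The degree process `Λ^H(B_m) = ∑_{i=1}^m (t^{k-1}(1-t)/(1-s)) X_1(B_i)`, `s = i/N`. -/
def Lam (w : Finset (Fin N) → ℝ) (k m : ℕ) (π : Equiv.Perm (Fin N)) : ℝ :=
  ∑ i : Fin N, if (i : ℕ) < m then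
      (((m : ℝ) / N) ^ (k - 1) * (1 - (m : ℝ) / N) / (1 - ((i : ℕ) + 1) / (N : ℝ))) *
        Xval w 1 (prefixSet π (i : ℕ)) (π i)
    else 0

/-- `E[X_1(B_i)² | B_{i-1}]` as a function of `B = B_{i-1}`. -/
def condVarX1 (w : Finset (Fin N) → ℝ) (B : Finset (Fin N)) : ℝ :=
  (∑ y ∈ Bᶜ, (Xval w 1 B y) ^ 2) / (Bᶜ.card : ℝ)

/-- The quadratic variation `V^H(m)` of the process `Λ^H`. -/
def quadVar (w : Finset (Fin N) → ℝ) (k m : ℕ) (π : Equiv.Perm (Fin N)) : ℝ :=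
  ∑ i : Fin N, if (i : ℕ) < m then
      (((m : ℝ) / N) ^ (k - 1) * (1 - (m : ℝ) / N) / (1 - ((i : ℕ) + 1) / (N : ℝ))) ^ 2 *
        condVarX1 w (prefixSet π (i : ℕ))
    else 0

/-- Indicator weight function of an unweighted hypergraph with edge set `E`. -/
def indW (E : Finset (Finset (Fin N))) : Finset (Fin N) → ℝ :=
  fun e => if e ∈ E then 1 else 0

/-- The weight function of the hypergraph `H(x)_j` obtained from the link `H(x)`:
a `j`-set `S` avoiding `x` gets weight the number of edges `e` of `H` with `x ∈ e`, `S ⊆ e`. -/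
def linkW (E : Finset (Finset (Fin N))) (x : Fin N) (j : ℕ) : Finset (Fin N) → ℝ :=
  fun S => if S.card = j ∧ x ∉ S then ((E.filter (fun e => x ∈ e ∧ S ⊆ e)).card : ℝ) else 0

/-- Expected edge count of a weighted hypergraph over a uniformly random `i`-element subset of
`[N] \ {x}`. -/
def expLink (w : Finset (Fin N) → ℝ) (x : Fin N) (i : ℕ) : ℝ :=
  (∑ B ∈ (Finset.univ.erase x).powerset.filter (fun B : Finset (Fin N) => B.card = i),
      edgeCount w B) / ((N - 1).choose i : ℝ)

/-- `e` is an increasing `k`-term arithmetic progression `{a, a+d, ..., a+(k-1)d}`. -/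
def isAPk (k : ℕ) (e : Finset (Fin N)) : Prop :=
  ∃ a d : ℕ, 0 < d ∧ a + (k - 1) * d < N ∧
    ∀ v : Fin N, v ∈ e ↔ ∃ j < k, (v : ℕ) = a + j * d

/-- The (indicator weight function of the) hypergraph `H^k` of increasing `k`-APs in `[N]`. -/
def apW (N k : ℕ) : Finset (Fin N) → ℝ :=
  fun e => if isAPk k e then 1 else 0

/-- The constant `θ_k`. -/
def thetaAP (k : ℕ) : ℝ :=
  (1 / (3 * ((k : ℝ) - 1) ^ 2)) *
    ((k : ℝ) - 3 * (k : ℝ) ^ 2 / 4 +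
      ∑ i ∈ Finset.Icc 1 k, ∑ j ∈ Finset.Icc (i + 1) k,
        (((k : ℝ) - 1) ^ 2 - ((k : ℝ) - (j : ℝ)) ^ 2 - ((i : ℝ) - 1) ^ 2) /
          (((j : ℝ) - 1) * ((k : ℝ) - (i : ℝ))))

/-- The constant `γ_k`. -/
def gammaAP (k : ℕ) : ℝ :=
  (4 / 3) *
    ((k : ℝ) +
      ∑ i ∈ Finset.Icc 1 k, ∑ j ∈ Finset.Icc (i + 1) k,
        (((k : ℝ) - 1) ^ 2 - ((k : ℝ) - (j : ℝ)) ^ 2 - ((i : ℝ) - 1) ^ 2) /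
          (((j : ℝ) - 1) * ((k : ℝ) - (i : ℝ))))

/-- `e` is a set of four pairwise distinct elements with `x + y = z + w`. -/
def isSidon (e : Finset (Fin N)) : Prop :=
  ∃ x y z w : Fin N, e = {x, y, z, w} ∧ e.card = 4 ∧ (x : ℕ) + (y : ℕ) = (z : ℕ) + (w : ℕ)

/-- The (indicator weight function of the) Sidon hypergraph `H^S`. -/
def sidonW (N : ℕ) : Finset (Fin N) → ℝ :=
  fun e => if isSidon e then 1 else 0

/-- The standard Gaussian cumulative distribution function. -/
def gaussCDF (x : ℝ) : ℝ :=
  ∫ y in Set.Iic x, Real.exp (-(y ^ 2) / 2) / Real.sqrt (2 * Real.pi)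

lemma edgeCount_eq_sum_ite (w : Finset (Fin N) → ℝ) (B : Finset (Fin N)) :
    edgeCount w B = ∑ f : Finset (Fin N), if f ⊆ B then w f else 0 := by
  rw [edgeCount, ← Finset.sum_filter]
  apply Finset.sum_congr _ (fun _ _ => rfl)
  ext f; simp

lemma degSet_eq_sum_ite (w : Finset (Fin N) → ℝ) (S : Finset (Fin N)) :
    degSet w S = ∑ f : Finset (Fin N), if S ⊆ f then w f else 0 := by
  rw [degSet, Finset.sum_filter]

lemma sum_ite_le_sum_degSet (w : Finset (Fin N) → ℝ) (hw : ∀ e, 0 ≤ w e)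
    (Q : Finset (Fin N) → Prop) [DecidablePred Q] (s : Finset (Finset (Fin N)))
    (hex : ∀ f, w f ≠ 0 → Q f → ∃ S ∈ s, S ⊆ f) :
    (∑ f : Finset (Fin N), if Q f then w f else 0) ≤ ∑ S ∈ s, degSet w S := by
  have hrw : ∑ S ∈ s, degSet w S
      = ∑ f : Finset (Fin N), ∑ S ∈ s, (if S ⊆ f then w f else 0) := by
    rw [Finset.sum_comm]
    exact Finset.sum_congr rfl fun S _ => degSet_eq_sum_ite w S
  rw [hrw]
  apply Finset.sum_le_sum
  intro f _
  have hnn : ∀ S ∈ s, 0 ≤ (if S ⊆ f then w f else 0) := by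
    intro S _; split
    · exact hw f
    · exact le_refl 0
  by_cases hq : Q f
  · by_cases hw0 : w f = 0
    · rw [if_pos hq, hw0]
      exact Finset.sum_nonneg fun S hS => by split <;> norm_num [hw0 ▸ hw f]
    · obtain ⟨S0, hS0s, hS0f⟩ := hex f hw0 hq
      rw [if_pos hq]
      calc w f = (if S0 ⊆ f then w f else 0) := by rw [if_pos hS0f]
        _ ≤ _ := Finset.single_le_sum hnn hS0s
  · rw [if_neg hq]
    exact Finset.sum_nonneg hnn

lemma degSet_le_of_card (k r C : ℕ) (hrk : r ≤ k)
    (w : Finset (Fin N) → ℝ) (hw : ∀ e, 0 ≤ w e)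
    (hcard : ∀ e, w e ≠ 0 → e.card = k)
    (hdeg : ∀ R : Finset (Fin N), R.card = r → degSet w R ≤ C)
    (j : ℕ) (hjr : j ≤ r) (S : Finset (Fin N)) (hS : S.card = j) :
    degSet w S ≤ (C : ℝ) * (N : ℝ) ^ (r - j) := by
  set T := (Finset.powersetCard r (Finset.univ : Finset (Fin N))).filter
    (fun R => S ⊆ R) with hT
  have step1 : degSet w S ≤ ∑ R ∈ T, degSet w R := by
    rw [degSet_eq_sum_ite]
    apply sum_ite_le_sum_degSet w hw (fun f => S ⊆ f) T
    intro f hf0 hSf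
    have hfk := hcard f hf0
    obtain ⟨R, hSR, hRf, hRcard⟩ :=
      Finset.exists_subsuperset_card_eq (n := r) hSf (by rw [hS]; exact hjr) (by rw [hfk]; exact hrk)
    refine ⟨R, ?_, hRf⟩
    rw [hT, Finset.mem_filter, Finset.mem_powersetCard]
    exact ⟨⟨Finset.subset_univ R, hRcard⟩, hSR⟩
  have step2 : ∑ R ∈ T, degSet w R ≤ (T.card : ℝ) * C := by
    have := Finset.sum_le_card_nsmul T (degSet w) (C : ℝ) (fun R hR => by
      apply hdeg
      rw [hT, Finset.mem_filter, Finset.mem_powersetCard] at hR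
      exact hR.1.2)
    simpa [nsmul_eq_mul] using this
  have step3 : (T.card : ℝ) ≤ (N : ℝ) ^ (r - j) := by
    have hinj : T.card ≤ (Finset.powersetCard (r - j)
        (Finset.univ : Finset (Fin N))).card := by
      apply Finset.card_le_card_of_injOn (fun R => R \ S)
      · intro R hR
        rw [hT, Finset.mem_coe, Finset.mem_filter, Finset.mem_powersetCard] at hR
        rw [Finset.mem_coe, Finset.mem_powersetCard]
        refine ⟨Finset.subset_univ _, ?_⟩
        rw [Finset.card_sdiff_of_subset hR.2, hR.1.2, hS]
      · intro R1 h1 R2 h2 hEq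
        simp only [Finset.mem_coe, hT, Finset.mem_filter] at h1 h2
        have e1 := Finset.sdiff_union_of_subset h1.2
        have e2 := Finset.sdiff_union_of_subset h2.2
        rw [← e1, ← e2, show R1 \ S = R2 \ S from hEq]
    rw [Finset.card_powersetCard, Finset.card_univ, Fintype.card_fin] at hinj
    calc (T.card : ℝ) ≤ (N.choose (r - j) : ℝ) := by exact_mod_cast hinj
      _ ≤ ((N ^ (r - j) : ℕ) : ℝ) := by exact_mod_cast Nat.choose_le_pow N (r - j)
      _ = (N : ℝ) ^ (r - j) := by push_cast; ring
  calc degSet w S ≤ (T.card : ℝ) * C := step1.trans step2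
    _ ≤ (N : ℝ) ^ (r - j) * C := by
        apply mul_le_mul_of_nonneg_right step3 (by positivity)
    _ = (C : ℝ) * (N : ℝ) ^ (r - j) := by ring

lemma binom_sum {α : Type*} [DecidableEq α] (s : Finset α) (p : ℝ) :
    ∑ T ∈ s.powerset, p ^ T.card * (1 - p) ^ (s.card - T.card) = 1 := by
  calc ∑ T ∈ s.powerset, p ^ T.card * (1 - p) ^ (s.card - T.card)
      = ∑ T ∈ s.powerset, (∏ _x ∈ T, p) * ∏ _x ∈ s \ T, (1 - p) := by
        refine Finset.sum_congr rfl fun T hT => ?_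
        rw [Finset.prod_const, Finset.prod_const,
          Finset.card_sdiff_of_subset (Finset.mem_powerset.mp hT)]
    _ = ∏ _x ∈ s, (p + (1 - p)) := (Finset.prod_add _ _ s).symm
    _ = 1 := by simp

lemma prob_superset {N : ℕ} (p : ℝ) (A : Finset (Fin N)) :
    ∑ B : Finset (Fin N), (if A ⊆ B then p ^ B.card * (1 - p) ^ (N - B.card) else 0)
      = p ^ A.card := by
  rw [← Finset.sum_filter]
  have hre : ∑ B ∈ Finset.univ.filter (fun B : Finset (Fin N) => A ⊆ B),
      p ^ B.card * (1 - p) ^ (N - B.card)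
      = ∑ T ∈ Aᶜ.powerset,
          p ^ A.card * (p ^ T.card * (1 - p) ^ (Aᶜ.card - T.card)) := by
    apply Finset.sum_nbij' (fun B => B \ A) (fun T => A ∪ T)
    · intro B hB
      rw [Finset.mem_filter] at hB
      rw [Finset.mem_powerset]
      intro x hx
      rw [Finset.mem_sdiff] at hx
      rw [Finset.mem_compl]
      exact hx.2
    · intro T hT
      rw [Finset.mem_filter]
      exact ⟨Finset.mem_univ _, Finset.subset_union_left⟩
    · intro B hB
      rw [Finset.mem_filter] at hB
      exact Finset.union_sdiff_of_subset hB.2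
    · intro T hT
      rw [Finset.mem_powerset] at hT
      have hd : Disjoint A T := by
        rw [Finset.disjoint_left]
        intro x hxA hxT
        exact (Finset.mem_compl.mp (hT hxT)) hxA
      rw [Finset.union_sdiff_cancel_left hd]
    · intro B hB
      rw [Finset.mem_filter] at hB
      have h1 : (B \ A).card + A.card = B.card :=
        Finset.card_sdiff_add_card_eq_card hB.2
      have h2 : B.card ≤ N := by
        have := Finset.card_le_univ B
        rwa [Fintype.card_fin] at this
      have h3 : Aᶜ.card = N - A.card := by
        rw [Finset.card_compl, Fintype.card_fin]
      rw [h3, ← mul_assoc, ← pow_add]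
      have e1 : A.card + (B \ A).card = B.card := by omega
      have e2 : N - A.card - (B \ A).card = N - B.card := by omega
      rw [e1, e2]
  rw [hre, ← Finset.mul_sum, binom_sum, mul_one]

lemma hA_bound (k r C : ℕ) (hr1 : 1 ≤ r) (hrk : r ≤ k) {N : ℕ}
    (w : Finset (Fin N) → ℝ)
    (hw : ∀ e, 0 ≤ w e) (hcard : ∀ e, w e ≠ 0 → e.card = k)
    (hdeg : ∀ R : Finset (Fin N), R.card = r → degSet w R ≤ C)
    (p t : ℝ) (hp0 : 0 ≤ p) (hpt : p ≤ t) (ht1 : t ≤ 1)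
    (A : Finset (Fin N)) (b : ℝ) (hAb : (A.card : ℝ) ≤ b) :
    ∑ f : Finset (Fin N), w f * p ^ (f \ A).card ≤
      p ^ k * totalWeight w
        + ((∑ j ∈ Finset.Icc 1 (r - 1), (C : ℝ) * b ^ j * (N : ℝ) ^ (r - j) * t ^ (k - j))
            + (C : ℝ) * b ^ r) := by
  have hp1 : p ≤ 1 := hpt.trans ht1
  have ht0 : 0 ≤ t := hp0.trans hpt
  have hb0 : 0 ≤ b := le_trans (Nat.cast_nonneg _) hAb
  have hterm : ∀ f : Finset (Fin N), w f * p ^ (f \ A).card ≤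
      (if (f ∩ A).card = 0 then w f * p ^ k else 0)
        + (∑ j ∈ Finset.Icc 1 (r - 1), if (f ∩ A).card = j then w f * p ^ (k - j) else 0)
        + (if r ≤ (f ∩ A).card then w f else 0) := by
    intro f
    by_cases hf0 : w f = 0
    · simp [hf0]
    · have hfk : f.card = k := hcard f hf0
      have hwf : 0 ≤ w f := hw f
      have hmidnn : (0:ℝ) ≤ ∑ j ∈ Finset.Icc 1 (r - 1),
          if (f ∩ A).card = j then w f * p ^ (k - j) else 0 :=
        Finset.sum_nonneg fun j _ => by
          split <;> [exact mul_nonneg (hw f) (pow_nonneg hp0 _); exact le_refl 0]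
      have hlastnn : (0:ℝ) ≤ if r ≤ (f ∩ A).card then w f else 0 := by
        split <;> [exact hwf; exact le_refl 0]
      have hfirstnn : (0:ℝ) ≤ if (f ∩ A).card = 0 then w f * p ^ k else 0 := by
        split <;> [exact mul_nonneg (hw f) (pow_nonneg hp0 _); exact le_refl 0]
      have hsd : (f \ A).card = k - (f ∩ A).card := by
        rw [← Finset.sdiff_inter_self_left f A,
          Finset.card_sdiff_of_subset Finset.inter_subset_left, hfk]
      rcases lt_or_ge (f ∩ A).card r with hlt | hge
      · rcases Nat.eq_zero_or_pos (f ∩ A).card with h0 | hpos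
        · have : w f * p ^ (f \ A).card = (if (f ∩ A).card = 0 then w f * p ^ k else 0) := by
            rw [if_pos h0, hsd, h0, Nat.sub_zero]
          rw [this]
          linarith
        · have hmem : (f ∩ A).card ∈ Finset.Icc 1 (r - 1) :=
            Finset.mem_Icc.mpr ⟨hpos, by omega⟩
          have hmid : (∑ j ∈ Finset.Icc 1 (r - 1),
              if (f ∩ A).card = j then w f * p ^ (k - j) else 0)
              = w f * p ^ (k - (f ∩ A).card) := by
            rw [Finset.sum_ite_eq (Finset.Icc 1 (r - 1)) ((f ∩ A).card)
              (fun j => w f * p ^ (k - j)), if_pos hmem]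
          rw [hsd]
          linarith [hmid]
      · have h1 : w f * p ^ (f \ A).card ≤ w f := by
          calc w f * p ^ (f \ A).card ≤ w f * 1 :=
            mul_le_mul_of_nonneg_left (pow_le_one₀ hp0 hp1) hwf
          _ = w f := mul_one _
        rw [if_pos hge] at hlastnn ⊢
        linarith
  calc ∑ f : Finset (Fin N), w f * p ^ (f \ A).card
      ≤ ∑ f : Finset (Fin N),
        ((if (f ∩ A).card = 0 then w f * p ^ k else 0)
          + (∑ j ∈ Finset.Icc 1 (r - 1), if (f ∩ A).card = j then w f * p ^ (k - j) else 0)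
          + (if r ≤ (f ∩ A).card then w f else 0)) :=
        Finset.sum_le_sum fun f _ => hterm f
    _ = (∑ f : Finset (Fin N), if (f ∩ A).card = 0 then w f * p ^ k else 0)
        + (∑ f : Finset (Fin N), ∑ j ∈ Finset.Icc 1 (r - 1),
            if (f ∩ A).card = j then w f * p ^ (k - j) else 0)
        + (∑ f : Finset (Fin N), if r ≤ (f ∩ A).card then w f else 0) := by
        rw [Finset.sum_add_distrib, Finset.sum_add_distrib]
    _ ≤ p ^ k * totalWeight w
        + (∑ j ∈ Finset.Icc 1 (r - 1), (C : ℝ) * b ^ j * (N : ℝ) ^ (r - j) * t ^ (k - j))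
        + (C : ℝ) * b ^ r := by
        gcongr ?_ + ?_ + ?_
        · calc (∑ f : Finset (Fin N), if (f ∩ A).card = 0 then w f * p ^ k else 0)
              ≤ ∑ f : Finset (Fin N), w f * p ^ k := by
                apply Finset.sum_le_sum
                intro f _
                split <;> [exact le_refl _; exact mul_nonneg (hw f) (pow_nonneg hp0 _)]
          _ = p ^ k * totalWeight w := by
                rw [totalWeight, Finset.mul_sum]
                exact Finset.sum_congr rfl fun f _ => mul_comm _ _
        · rw [Finset.sum_comm]
          apply Finset.sum_le_sum
          intro j hj
          rw [Finset.mem_Icc] at hj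
          have hjr : j ≤ r := by omega
          have hsplit : (∑ f : Finset (Fin N),
              if (f ∩ A).card = j then w f * p ^ (k - j) else 0)
              = (∑ f : Finset (Fin N), if (f ∩ A).card = j then w f else 0) * p ^ (k - j) := by
            rw [Finset.sum_mul]
            refine Finset.sum_congr rfl fun f _ => ?_
            split <;> simp
          rw [hsplit]
          have hWj : (∑ f : Finset (Fin N), if (f ∩ A).card = j then w f else 0)
              ≤ ∑ S ∈ Finset.powersetCard j A, degSet w S := by
            apply sum_ite_le_sum_degSet w hw _ _
            intro f _ hQ
            exact ⟨f ∩ A, Finset.mem_powersetCard.mpr ⟨Finset.inter_subset_right, hQ⟩,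
              Finset.inter_subset_left⟩
          have hdegb : ∑ S ∈ Finset.powersetCard j A, degSet w S
              ≤ ((Finset.powersetCard j A).card : ℝ) * ((C : ℝ) * (N : ℝ) ^ (r - j)) := by
            have := Finset.sum_le_card_nsmul (Finset.powersetCard j A) (degSet w)
              ((C : ℝ) * (N : ℝ) ^ (r - j)) (fun S hS =>
                degSet_le_of_card k r C hrk w hw hcard hdeg j hjr S
                  (Finset.mem_powersetCard.mp hS).2)
            simpa [nsmul_eq_mul] using this
          have hcardb : ((Finset.powersetCard j A).card : ℝ) ≤ b ^ j := by
            rw [Finset.card_powersetCard]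
            calc ((A.card.choose j : ℕ) : ℝ) ≤ ((A.card ^ j : ℕ) : ℝ) := by
                  exact_mod_cast Nat.choose_le_pow A.card j
              _ = ((A.card : ℝ)) ^ j := by push_cast; ring
              _ ≤ b ^ j := pow_le_pow_left₀ (Nat.cast_nonneg _) hAb j
          have hWnn : (0:ℝ) ≤ ∑ f : Finset (Fin N), if (f ∩ A).card = j then w f else 0 :=
            Finset.sum_nonneg fun f _ => by split <;> [exact hw f; exact le_refl 0]
          calc (∑ f : Finset (Fin N), if (f ∩ A).card = j then w f else 0) * p ^ (k - j)
              ≤ (b ^ j * ((C : ℝ) * (N : ℝ) ^ (r - j))) * t ^ (k - j) := by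
                apply mul_le_mul
                · exact le_trans hWj (le_trans hdegb
                    (mul_le_mul_of_nonneg_right hcardb (by positivity)))
                · exact pow_le_pow_left₀ hp0 hpt _
                · positivity
                · positivity
            _ = (C : ℝ) * b ^ j * (N : ℝ) ^ (r - j) * t ^ (k - j) := by ring
        · have hWr : (∑ f : Finset (Fin N), if r ≤ (f ∩ A).card then w f else 0)
              ≤ ∑ S ∈ Finset.powersetCard r A, degSet w S := by
            apply sum_ite_le_sum_degSet w hw _ _
            intro f _ hQ
            obtain ⟨R, hRsub, hRcard⟩ := Finset.exists_subset_card_eq hQ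
            exact ⟨R, Finset.mem_powersetCard.mpr
              ⟨hRsub.trans Finset.inter_subset_right, hRcard⟩,
              hRsub.trans Finset.inter_subset_left⟩
          have hdegb : ∑ S ∈ Finset.powersetCard r A, degSet w S
              ≤ ((Finset.powersetCard r A).card : ℝ) * (C : ℝ) := by
            have := Finset.sum_le_card_nsmul (Finset.powersetCard r A) (degSet w)
              ((C : ℝ)) (fun S hS => hdeg S (Finset.mem_powersetCard.mp hS).2)
            simpa [nsmul_eq_mul] using this
          have hcardb : ((Finset.powersetCard r A).card : ℝ) ≤ b ^ r := by
            rw [Finset.card_powersetCard]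
            calc ((A.card.choose r : ℕ) : ℝ) ≤ ((A.card ^ r : ℕ) : ℝ) := by
                  exact_mod_cast Nat.choose_le_pow A.card r
              _ = ((A.card : ℝ)) ^ r := by push_cast; ring
              _ ≤ b ^ r := pow_le_pow_left₀ (Nat.cast_nonneg _) hAb r
          calc (∑ f : Finset (Fin N), if r ≤ (f ∩ A).card then w f else 0)
              ≤ ((Finset.powersetCard r A).card : ℝ) * (C : ℝ) := hWr.trans hdegb
            _ ≤ b ^ r * (C : ℝ) :=
              mul_le_mul_of_nonneg_right hcardb (Nat.cast_nonneg _)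
            _ = (C : ℝ) * b ^ r := mul_comm _ _
    _ = _ := by ring

lemma moment_ind (k : ℕ) {N : ℕ} (w : Finset (Fin N) → ℝ)
    (hw : ∀ e, 0 ≤ w e) (hcard : ∀ e, w e ≠ 0 → e.card = k)
    (p : ℝ) (hp0 : 0 ≤ p) (L : ℕ) (μD : ℝ) (hμD : 0 ≤ μD)
    (hA : ∀ A : Finset (Fin N), A.card ≤ L * k →
      ∑ f : Finset (Fin N), w f * p ^ (f \ A).card ≤ μD) :
    ∀ m : ℕ, ∀ A : Finset (Fin N), A.card + m * k ≤ L * k →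
      (∑ B : Finset (Fin N),
          if A ⊆ B then p ^ B.card * (1 - p) ^ (N - B.card) * edgeCount w B ^ m else 0)
        ≤ p ^ A.card * μD ^ m := by
  intro m
  induction m with
  | zero =>
    intro A _
    have : (∑ B : Finset (Fin N),
        if A ⊆ B then p ^ B.card * (1 - p) ^ (N - B.card) * edgeCount w B ^ 0 else 0)
        = ∑ B : Finset (Fin N),
          if A ⊆ B then p ^ B.card * (1 - p) ^ (N - B.card) else 0 := by
      refine Finset.sum_congr rfl fun B _ => ?_
      rw [pow_zero, mul_one]
    rw [this, prob_superset, pow_zero, mul_one]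
  | succ n ih =>
    intro A hAle
    rw [Nat.succ_mul] at hAle
    have hXexp : ∀ B : Finset (Fin N),
        (if A ⊆ B then p ^ B.card * (1 - p) ^ (N - B.card) * edgeCount w B ^ (n + 1) else 0)
        = ∑ f : Finset (Fin N), w f *
            (if A ∪ f ⊆ B then p ^ B.card * (1 - p) ^ (N - B.card) * edgeCount w B ^ n
              else 0) := by
      intro B
      by_cases hAB : A ⊆ B
      · rw [if_pos hAB, pow_succ]
        nth_rewrite 2 [edgeCount_eq_sum_ite w B]
        rw [Finset.mul_sum, Finset.mul_sum]
        refine Finset.sum_congr rfl fun f _ => ?_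
        by_cases hfB : f ⊆ B
        · rw [if_pos hfB, if_pos (Finset.union_subset hAB hfB)]
          ring
        · rw [if_neg hfB, if_neg (fun h => hfB ((Finset.subset_union_right).trans h))]
          ring
      · rw [if_neg hAB]
        symm
        apply Finset.sum_eq_zero
        intro f _
        rw [if_neg (fun h => hAB ((Finset.subset_union_left).trans h)), mul_zero]
    have hAcard : A.card ≤ L * k := by omega
    calc (∑ B : Finset (Fin N),
          if A ⊆ B then p ^ B.card * (1 - p) ^ (N - B.card) * edgeCount w B ^ (n + 1) else 0)
        = ∑ f : Finset (Fin N), w f * (∑ B : Finset (Fin N),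
            if A ∪ f ⊆ B then p ^ B.card * (1 - p) ^ (N - B.card) * edgeCount w B ^ n
              else 0) := by
          rw [Finset.sum_congr rfl fun B _ => hXexp B, Finset.sum_comm]
          exact Finset.sum_congr rfl fun f _ => (Finset.mul_sum _ _ _).symm
      _ ≤ ∑ f : Finset (Fin N), w f * (p ^ (A ∪ f).card * μD ^ n) := by
          apply Finset.sum_le_sum
          intro f _
          by_cases hf0 : w f = 0
          · rw [hf0, zero_mul, zero_mul]
          · apply mul_le_mul_of_nonneg_left _ (hw f)
            apply ih
            have h1 : (A ∪ f).card ≤ A.card + f.card := Finset.card_union_le A f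
            have h2 : f.card = k := hcard f hf0
            omega
      _ = (p ^ A.card * μD ^ n) * ∑ f : Finset (Fin N), w f * p ^ (f \ A).card := by
          rw [Finset.mul_sum]
          refine Finset.sum_congr rfl fun f _ => ?_
          have hc : (A ∪ f).card = A.card + (f \ A).card := by
            have := Finset.card_sdiff_add_card f A
            rw [Finset.union_comm f A] at this
            omega
          rw [hc, pow_add]
          ring
      _ ≤ (p ^ A.card * μD ^ n) * μD := by
          apply mul_le_mul_of_nonneg_left (hA A hAcard)
          exact mul_nonneg (pow_nonneg hp0 _) (pow_nonneg hμD _)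
      _ = p ^ A.card * μD ^ (n + 1) := by ring

theorem statement7
    (k r C : ℕ) (hr1 : 1 ≤ r) (hrk : r ≤ k) (hC : 0 < C) (ε : ℝ) (hε : 0 < ε) :
    ∃ c : ℝ, 0 < c ∧
      ∀ (N : ℕ) (w : Finset (Fin N) → ℝ),
        (∀ e, 0 ≤ w e) → (∀ e, w e ≠ 0 → e.card = k) →
        (∀ R : Finset (Fin N), R.card = r → degSet w R ≤ C) →
        ∀ t : ℝ, 0 < t → t < 1 →
        ∀ p : ℝ, 0 ≤ p → p ≤ t →
        ∀ ℓ : ℕ, 1 ≤ ℓ → (ℓ : ℝ) ≤ c * t ^ ((k : ℝ) / r) * N →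
          expBp N p (fun B => edgeCount w B ^ ℓ) ≤
            max ((p ^ k * totalWeight w) ^ ℓ * (1 + ε / 2) ^ ℓ)
              ((ε * t ^ k * (N : ℝ) ^ r / 2) ^ ℓ) := by
  have hk1 : 1 ≤ k := le_trans hr1 hrk
  have hkR : (0:ℝ) < (k:ℝ) := by exact_mod_cast hk1
  have hrR : (0:ℝ) < (r:ℝ) := by exact_mod_cast hr1
  have hCR : (0:ℝ) < (C:ℝ) := by exact_mod_cast hC
  set c : ℝ := min ((k:ℝ))⁻¹ (ε ^ 2 / (2 * C * r * k * (2 + ε))) with hcdef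
  have hc0 : 0 < c := by
    apply lt_min
    · positivity
    · positivity
  refine ⟨c, hc0, ?_⟩
  intro N w hw hcard hdeg t ht0 ht1 p hp0 hpt ℓ hℓ1 hℓc
  set s : ℝ := t ^ ((k : ℝ) / r) with hsdef
  have hs0 : 0 < s := Real.rpow_pos_of_pos ht0 _
  set b : ℝ := (ℓ : ℝ) * k with hbdef
  set μ : ℝ := p ^ k * totalWeight w with hμdef
  set D : ℝ := (∑ j ∈ Finset.Icc 1 (r - 1),
      (C : ℝ) * b ^ j * (N : ℝ) ^ (r - j) * t ^ (k - j)) + (C : ℝ) * b ^ r with hDdef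
  have hb0 : 0 ≤ b := by positivity
  have hμ0 : 0 ≤ μ := mul_nonneg (pow_nonneg hp0 _)
    (Finset.sum_nonneg fun e _ => hw e)
  have hD0 : 0 ≤ D := by
    apply add_nonneg
    · apply Finset.sum_nonneg
      intro j _
      have ht0' : (0:ℝ) ≤ t := ht0.le
      positivity
    · positivity
  have hAbound : ∀ A : Finset (Fin N), A.card ≤ ℓ * k →
      ∑ f : Finset (Fin N), w f * p ^ (f \ A).card ≤ μ + D := by
    intro A hA
    have hAb : (A.card : ℝ) ≤ b := by
      calc (A.card : ℝ) ≤ ((ℓ * k : ℕ) : ℝ) := by exact_mod_cast hA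
        _ = b := by push_cast; ring
    exact hA_bound k r C hr1 hrk w hw hcard hdeg p t hp0 hpt ht1.le A b hAb
  have hmain : expBp N p (fun B => edgeCount w B ^ ℓ) ≤ (μ + D) ^ ℓ := by
    have h := moment_ind k w hw hcard p hp0 ℓ (μ + D) (add_nonneg hμ0 hD0) hAbound ℓ ∅
      (by simp)
    calc expBp N p (fun B => edgeCount w B ^ ℓ)
        = ∑ B : Finset (Fin N), (if (∅ : Finset (Fin N)) ⊆ B then
            p ^ B.card * (1 - p) ^ (N - B.card) * edgeCount w B ^ ℓ else 0) := by
          rw [expBp]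
          exact Finset.sum_congr rfl fun B _ => (if_pos (Finset.empty_subset B)).symm
      _ ≤ p ^ (∅ : Finset (Fin N)).card * (μ + D) ^ ℓ := h
      _ = (μ + D) ^ ℓ := by rw [Finset.card_empty, pow_zero, one_mul]
  -- numeric bound on D
  set E : ℝ := (C : ℝ) * c * k * t ^ k * (N : ℝ) ^ r with hEdef
  have hE0 : 0 ≤ E := by
    have := ht0.le
    positivity
  have hck1 : c * k ≤ 1 := by
    have h1 : c ≤ ((k:ℝ))⁻¹ := min_le_left _ _
    calc c * k ≤ ((k:ℝ))⁻¹ * k := mul_le_mul_of_nonneg_right h1 hkR.le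
      _ = 1 := inv_mul_cancel₀ (ne_of_gt hkR)
  have hck0 : 0 ≤ c * k := by positivity
  have hble : b ≤ c * k * s * N := by
    calc b = (ℓ : ℝ) * k := rfl
      _ ≤ (c * s * N) * k := mul_le_mul_of_nonneg_right hℓc hkR.le
      _ = c * k * s * N := by ring
  have hpow : ∀ j : ℕ, 1 ≤ j → j ≤ r → s ^ j * t ^ (k - j) ≤ t ^ k := by
    intro j hj1 hjr
    have hjk : j ≤ k := hjr.trans hrk
    have e1 : s ^ j = t ^ (((k : ℝ) / r) * j) := by
      rw [hsdef, ← Real.rpow_natCast (t ^ ((k : ℝ) / r)) j, ← Real.rpow_mul ht0.le]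
    have e2 : t ^ (k - j) = t ^ (((k - j : ℕ) : ℝ)) := by
      rw [Real.rpow_natCast]
    have e3 : t ^ k = t ^ ((k : ℝ)) := by rw [Real.rpow_natCast]
    rw [e1, e2, e3, ← Real.rpow_add ht0]
    apply Real.rpow_le_rpow_of_exponent_ge ht0 ht1.le
    have e4 : ((k - j : ℕ) : ℝ) = (k : ℝ) - j := by
      rw [Nat.cast_sub hjk]
    rw [e4]
    have h5 : (1:ℝ) ≤ (k : ℝ) / r := (one_le_div hrR).mpr (by exact_mod_cast hrk)
    have h6 : (j : ℝ) ≤ ((k : ℝ) / r) * j :=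
      le_mul_of_one_le_left (Nat.cast_nonneg j) h5
    linarith
  have htermE : ∀ j : ℕ, 1 ≤ j → j ≤ r →
      (C : ℝ) * b ^ j * (N : ℝ) ^ (r - j) * t ^ (k - j) ≤ E := by
    intro j hj1 hjr
    have h1 : b ^ j ≤ (c * k * s * N) ^ j :=
      pow_le_pow_left₀ hb0 hble j
    have h2 : (c * k) ^ j ≤ c * k := by
      calc (c * k) ^ j ≤ (c * k) ^ 1 := pow_le_pow_of_le_one hck0 hck1 hj1
        _ = c * k := pow_one _
    have h3 : (N : ℝ) ^ j * (N : ℝ) ^ (r - j) = (N : ℝ) ^ r := by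
      rw [← pow_add]
      congr 1
      omega
    calc (C : ℝ) * b ^ j * (N : ℝ) ^ (r - j) * t ^ (k - j)
        ≤ (C : ℝ) * (c * k * s * N) ^ j * (N : ℝ) ^ (r - j) * t ^ (k - j) := by
          have htnn : (0:ℝ) ≤ t ^ (k - j) := pow_nonneg ht0.le _
          have hNnn : (0:ℝ) ≤ (N:ℝ) ^ (r - j) := pow_nonneg (Nat.cast_nonneg _) _
          apply mul_le_mul_of_nonneg_right _ htnn
          apply mul_le_mul_of_nonneg_right _ hNnn
          exact mul_le_mul_of_nonneg_left h1 hCR.le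
      _ = (C : ℝ) * ((c * k) ^ j * (s ^ j * t ^ (k - j)) * ((N:ℝ) ^ j * (N:ℝ) ^ (r - j))) := by
          rw [mul_pow, mul_pow]
          ring
      _ ≤ (C : ℝ) * ((c * k) * t ^ k * (N:ℝ) ^ r) := by
          apply mul_le_mul_of_nonneg_left _ hCR.le
          rw [h3]
          have hsj : 0 ≤ s ^ j * t ^ (k - j) := by positivity
          have h4 : (c * k) ^ j * (s ^ j * t ^ (k - j)) ≤ (c * k) * t ^ k := by
            apply mul_le_mul h2 (hpow j hj1 hjr) hsj hck0
          apply mul_le_mul_of_nonneg_right h4 (pow_nonneg (Nat.cast_nonneg _) _)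
      _ = E := by rw [hEdef]; ring
  have hDE : D ≤ (r : ℝ) * E := by
    have hsum : ∑ j ∈ Finset.Icc 1 (r - 1),
        (C : ℝ) * b ^ j * (N : ℝ) ^ (r - j) * t ^ (k - j)
        ≤ ((Finset.Icc 1 (r - 1)).card : ℝ) * E := by
      have := Finset.sum_le_card_nsmul (Finset.Icc 1 (r - 1))
        (fun j => (C : ℝ) * b ^ j * (N : ℝ) ^ (r - j) * t ^ (k - j)) E
        (fun j hj => by
          rw [Finset.mem_Icc] at hj
          exact htermE j hj.1 (by omega))
      simpa [nsmul_eq_mul] using this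
    have hlast : (C : ℝ) * b ^ r ≤ E := by
      have h1 : b ^ r ≤ (c * k * s * N) ^ r := pow_le_pow_left₀ hb0 hble r
      have h2 : (c * k) ^ r ≤ c * k :=
        (pow_le_pow_of_le_one hck0 hck1 hr1).trans_eq (pow_one _)
      have hsr : s ^ r = t ^ k := by
        rw [hsdef, ← Real.rpow_natCast (t ^ ((k:ℝ)/r)) r, ← Real.rpow_mul ht0.le,
          div_mul_cancel₀ _ (ne_of_gt hrR), Real.rpow_natCast]
      calc (C:ℝ) * b ^ r ≤ (C:ℝ) * (c * k * s * N) ^ r :=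
          mul_le_mul_of_nonneg_left h1 hCR.le
        _ = (C:ℝ) * ((c * k) ^ r * (s ^ r * (N:ℝ) ^ r)) := by
            rw [mul_pow, mul_pow, mul_pow]; ring
        _ ≤ (C:ℝ) * ((c * k) * (s ^ r * (N:ℝ) ^ r)) := by
            apply mul_le_mul_of_nonneg_left _ hCR.le
            apply mul_le_mul_of_nonneg_right h2 (by positivity)
        _ = E := by rw [hEdef, hsr]; ring
    have hcardIcc : ((Finset.Icc 1 (r - 1)).card : ℝ) = (r : ℝ) - 1 := by
      rw [Nat.card_Icc]
      have : r - 1 + 1 - 1 = r - 1 := by omega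
      rw [this]
      rw [Nat.cast_sub hr1]
      norm_num
    rw [hcardIcc] at hsum
    have : ((r:ℝ) - 1) * E + E = (r : ℝ) * E := by ring
    linarith
  rcases le_or_gt D (ε / 2 * μ) with hcase | hcase
  · refine le_trans hmain (le_trans ?_ (le_max_left _ _))
    have h1 : μ * (1 + ε / 2) = μ + ε / 2 * μ := by ring
    have h2 : μ + D ≤ μ * (1 + ε / 2) := by linarith
    calc (μ + D) ^ ℓ ≤ (μ * (1 + ε / 2)) ^ ℓ :=
        pow_le_pow_left₀ (add_nonneg hμ0 hD0) h2 ℓ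
      _ = μ ^ ℓ * (1 + ε / 2) ^ ℓ := mul_pow _ _ _
  · refine le_trans hmain (le_trans ?_ (le_max_right _ _))
    have hμlt : μ ≤ 2 / ε * D := by
      have h := mul_le_mul_of_nonneg_left hcase.le (by positivity : (0:ℝ) ≤ 2 / ε)
      have heq : 2 / ε * (ε / 2 * μ) = μ := by
        rw [← mul_assoc, div_mul_div_comm, mul_comm (2:ℝ) ε,
          div_self (by positivity : ε * 2 ≠ 0), one_mul]
      linarith [h, heq]
    have hsum : μ + D ≤ 2 / ε * ((r:ℝ) * E) + (r:ℝ) * E := by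
      have h2 : 2 / ε * D ≤ 2 / ε * ((r:ℝ) * E) :=
        mul_le_mul_of_nonneg_left hDE (by positivity)
      linarith
    have hcoef : (r:ℝ) * C * k * c * (2 + ε) / ε ≤ ε / 2 := by
      have hmin := min_le_right ((k:ℝ))⁻¹ (ε ^ 2 / (2 * C * r * k * (2 + ε)))
      have hdenom : (0:ℝ) < 2 * C * r * k * (2 + ε) := by positivity
      rw [le_div_iff₀ hdenom] at hmin
      rw [div_le_div_iff₀ hε two_pos]
      nlinarith [hmin]
    have hP0 : (0:ℝ) ≤ t ^ k * (N : ℝ) ^ r := by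
      have := ht0.le
      positivity
    have hfinal : μ + D ≤ ε * t ^ k * (N : ℝ) ^ r / 2 := by
      have he : 2 / ε * ((r:ℝ) * E) + (r:ℝ) * E
          = ((r:ℝ) * C * k * c * (2 + ε) / ε) * (t ^ k * (N : ℝ) ^ r) := by
        rw [hEdef]
        field_simp
      have h3 : ((r:ℝ) * C * k * c * (2 + ε) / ε) * (t ^ k * (N : ℝ) ^ r)
          ≤ (ε / 2) * (t ^ k * (N : ℝ) ^ r) :=
        mul_le_mul_of_nonneg_right hcoef hP0
      have h4 : (ε / 2) * (t ^ k * (N : ℝ) ^ r) = ε * t ^ k * (N : ℝ) ^ r / 2 := by ring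
      linarith [hsum, he ▸ hsum]
    exact pow_le_pow_left₀ (add_nonneg hμ0 hD0) hfinal ℓ


end Paper

end
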